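/- The duality map D carries the diagonal line {x = y} into the unit circle: for every x ∈ ℝ with x(2x² − 2x + 1) ≠ 0, the point (u,v) = D(x,x) satisfies u² + v² = 1. -/

import Mathlib

/-- Denominator whose nonvanishing defines the domain of the duality map `D`. -/
noncomputable def dDen (x y : ℝ) : ℝ := x * (x ^ 2 - 2 * x + y ^ 2 + 1)

/-- The duality map `D`. -/
noncomputable def D (p : ℝ × ℝ) : ℝ × ℝ :=
  (-(p.2 * (p.1 ^ 2 - p.1 + p.2 ^ 2 - p.2)) / dDen p.1 p.2,
    (p.2 * (p.1 + p.2 - 1)) / dDen p.1 p.2)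

/-- The duality map `D` carries the diagonal line `x = y` into the unit circle. -/
theorem D_diagonal_to_unit_circle (x : ℝ) (h : x * (2 * x ^ 2 - 2 * x + 1) ≠ 0) :
    (D (x, x)).1 ^ 2 + (D (x, x)).2 ^ 2 = 1 := by
  have hd : dDen x x ≠ 0 := by unfold dDen; intro hc; apply h; rw [← hc]; ring
  simp only [D, dDen] at *
  rw [div_pow, div_pow, ← add_div, div_eq_one_iff_eq (pow_ne_zero 2 hd)]
  ring
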